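/- Let B be a finite left regular band, k a commutative ring with unit, and n a natural number such that the poset Λ(B) = {Bb : b ∈ B}, ordered by inclusion, contains no strictly increasing chain of n+1 elements. Say that r ∈ kB lies in the kernel of the support map if for every c ∈ B one has Σ_{b ∈ B, Bb = Bc} r(b) = 0 (the coefficients of r sum to zero over each class {b : Bb = Bc}). Then for any r₁, …, r_{n+1} ∈ kB all lying in the kernel of the support map, the (ordered) product r₁·r₂⋯r_{n+1} = 0 in kB. (Thus the kernel of the support map is a nilpotent ideal.) -/

import Mathlib

/-- The principal left ideal of `a` in a semigroup: `Ba = {x * a : x ∈ B}`. -/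
def leftIdeal {B : Type*} [Mul B] (a : B) : Set B := {x : B | ∃ y : B, y * a = x}

section Aux

variable {B : Type*} [Semigroup B] {k : Type*} [CommRing k]

lemma mem_leftIdeal_iff (idem : ∀ x : B, x * x = x) (z a : B) :
    z ∈ leftIdeal a ↔ z * a = z := by
  constructor
  · rintro ⟨y, rfl⟩
    rw [mul_assoc, idem]
  · intro h; exact ⟨z, h⟩

lemma leftIdeal_subset_iff (idem : ∀ x : B, x * x = x) (w b : B) :
    leftIdeal w ⊆ leftIdeal b ↔ w * b = w := by
  constructor
  · intro h
    exact (mem_leftIdeal_iff idem w b).1 (h ⟨w, idem w⟩)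
  · rintro h z ⟨y, rfl⟩
    rw [mem_leftIdeal_iff idem, mul_assoc, h]

lemma leftIdeal_mul_lt (idem : ∀ x : B, x * x = x) (lrb : ∀ x y : B, x * y * x = x * y)
    (w b : B) (h : w * b ≠ w) : leftIdeal (w * b) < leftIdeal w := by
  refine lt_of_le_of_ne ((leftIdeal_subset_iff idem _ _).2 (lrb w b)) ?_
  intro heq
  apply h
  have h2 : leftIdeal w ⊆ leftIdeal (w * b) := heq.ge
  have h3 := (leftIdeal_subset_iff idem w (w * b)).1 h2
  rwa [← mul_assoc, idem] at h3

end Aux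

section Aux2

open Classical MonoidAlgebra

variable {B : Type*} [Semigroup B] [Fintype B] {k : Type*} [CommRing k]

open Classical in
def inKer (r : MonoidAlgebra k B) : Prop :=
  ∀ c : B, (∑ b : B, if leftIdeal b = leftIdeal c then r.coeff b else 0) = 0

lemma ker_sum (idem : ∀ x : B, x * x = x) (r : MonoidAlgebra k B) (hr : inKer r) (w : B) :
    (∑ b : B, if w * b = w then r.coeff b else 0) = 0 := by
  classical
  have step1 : (∑ b : B, if w * b = w then r.coeff b else 0)
      = ∑ b : B, (if leftIdeal w ⊆ leftIdeal b then r.coeff b else 0) :=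
    Finset.sum_congr rfl fun b _ => if_congr (leftIdeal_subset_iff idem w b).symm rfl rfl
  rw [step1,
    ← Finset.sum_fiberwise_of_maps_to (g := fun b : B => leftIdeal b)
      (t := Finset.univ.image (fun b : B => leftIdeal b))
      (fun x _ => Finset.mem_image_of_mem _ (Finset.mem_univ x))]
  apply Finset.sum_eq_zero
  intro I hI
  obtain ⟨c, -, hc⟩ := Finset.mem_image.1 hI
  subst hc
  by_cases hwI : leftIdeal w ⊆ leftIdeal c
  · have e1 : ∑ b ∈ Finset.univ.filter (fun b : B => leftIdeal b = leftIdeal c),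
        (if leftIdeal w ⊆ leftIdeal b then r.coeff b else 0)
        = ∑ b ∈ Finset.univ.filter (fun b : B => leftIdeal b = leftIdeal c), r.coeff b := by
      apply Finset.sum_congr rfl
      intro b hb
      rw [Finset.mem_filter] at hb
      rw [if_pos (hb.2 ▸ hwI)]
    rw [e1, Finset.sum_filter]
    exact hr c
  · apply Finset.sum_eq_zero
    intro b hb
    rw [Finset.mem_filter] at hb
    rw [if_neg (hb.2 ▸ hwI)]

lemma foldl_zero (L : List (MonoidAlgebra k B)) : L.foldl (· * ·) 0 = 0 := by
  induction L with
  | nil => rfl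
  | cons s L ih => simpa [List.foldl_cons] using ih

lemma foldl_add (L : List (MonoidAlgebra k B)) :
    ∀ x y : MonoidAlgebra k B, L.foldl (· * ·) (x + y) = L.foldl (· * ·) x + L.foldl (· * ·) y := by
  induction L with
  | nil => intro x y; rfl
  | cons s L ih =>
      intro x y
      simp only [List.foldl_cons, add_mul]
      exact ih _ _

lemma foldl_smul (L : List (MonoidAlgebra k B)) :
    ∀ (a : k) (x : MonoidAlgebra k B), L.foldl (· * ·) (a • x) = a • L.foldl (· * ·) x := by
  induction L with
  | nil => intro a x; rfl
  | cons s L ih =>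
      intro a x
      simp only [List.foldl_cons, smul_mul_assoc]
      exact ih _ _

lemma foldl_sum {ι : Type*} (s : Finset ι) (f : ι → MonoidAlgebra k B)
    (L : List (MonoidAlgebra k B)) :
    L.foldl (· * ·) (∑ i ∈ s, f i) = ∑ i ∈ s, L.foldl (· * ·) (f i) := by
  classical
  induction s using Finset.induction with
  | empty => simpa using foldl_zero L
  | insert _ _ hi ih =>
      rw [Finset.sum_insert hi, Finset.sum_insert hi, foldl_add, ih]

lemma expand_sum (r : MonoidAlgebra k B) : r = ∑ b : B, MonoidAlgebra.single b (r.coeff b) := by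
  classical
  conv_lhs => rw [← MonoidAlgebra.sum_coeff_single r]
  exact Finsupp.sum_fintype r.coeff _ (fun b => by simp)

lemma single_mul_expand (w : B) (r : MonoidAlgebra k B) :
    MonoidAlgebra.single w (1 : k) * r = ∑ b : B, MonoidAlgebra.single (w * b) (r.coeff b) := by
  classical
  conv_lhs => rw [expand_sum r]
  rw [Finset.mul_sum]
  exact Finset.sum_congr rfl fun b _ => by
    rw [MonoidAlgebra.single_mul_single, one_mul]

lemma key (idem : ∀ x : B, x * x = x) (lrb : ∀ x y : B, x * y * x = x * y) :
    ∀ (m : ℕ) (w : B) (L : List (MonoidAlgebra k B)),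
    (∀ s ∈ L, inKer s) → m ≤ L.length →
    (¬ ∃ c : ℕ → B, (∀ i < m, leftIdeal (c i) < leftIdeal (c (i + 1))) ∧ c m = w) →
    L.foldl (· * ·) (MonoidAlgebra.single w (1 : k)) = 0 := by
  classical
  intro m
  induction m with
  | zero =>
      intro w L _ _ hch
      exact absurd ⟨fun _ => w, fun i h => absurd h (Nat.not_lt_zero i), rfl⟩ hch
  | succ m ih =>
      intro w L hmem hlen hch
      match L with
      | [] => simp at hlen
      | s :: L' =>
        have hsker : inKer s := hmem s List.mem_cons_self
        have hlen' : m ≤ L'.length := by simpa using Nat.le_of_succ_le_succ hlen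
        have hmem' : ∀ t ∈ L', inKer t := fun t ht => hmem t (List.mem_cons_of_mem s ht)
        rw [List.foldl_cons, single_mul_expand, foldl_sum]
        have split : ∀ b : B, L'.foldl (· * ·) (MonoidAlgebra.single (w * b) (s.coeff b))
            = (if w * b = w then s.coeff b else 0) • L'.foldl (· * ·) (MonoidAlgebra.single w (1 : k))
              + (if w * b = w then 0 else L'.foldl (· * ·) (MonoidAlgebra.single (w * b) (s.coeff b))) := by
          intro b
          by_cases h : w * b = w
          · rw [if_pos h, if_pos h, add_zero, ← foldl_smul, MonoidAlgebra.smul_single', mul_one, h]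
          · rw [if_neg h, if_neg h, zero_smul, zero_add]
        rw [Finset.sum_congr rfl fun b _ => split b, Finset.sum_add_distrib, ← Finset.sum_smul,
          ker_sum idem s hsker w, zero_smul, zero_add]
        apply Finset.sum_eq_zero
        intro b _
        by_cases h : w * b = w
        · rw [if_pos h]
        · rw [if_neg h]
          have e2 : MonoidAlgebra.single (w * b) (s.coeff b)
              = s.coeff b • MonoidAlgebra.single (w * b) (1 : k) := by
            rw [MonoidAlgebra.smul_single', mul_one]
          rw [e2, foldl_smul]
          rw [ih (w * b) L' hmem' hlen' ?_, smul_zero]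
          rintro ⟨c, hc, hcm⟩
          apply hch
          refine ⟨fun i => if i = m + 1 then w else c i, ?_, if_pos rfl⟩
          intro i hi
          dsimp only
          rcases Nat.lt_succ_iff_lt_or_eq.1 hi with h1 | h1
          · rw [if_neg (show ¬ i = m + 1 by omega),
              if_neg (show ¬ i + 1 = m + 1 by omega)]
            exact hc i h1
          · rw [if_neg (show ¬ i = m + 1 by omega),
              if_pos (show i + 1 = m + 1 by omega), h1, hcm]
            exact leftIdeal_mul_lt idem lrb w b h

end Aux2


open Classical in
/-- If the poset `Λ(B)` of principal left ideals of a finite left regular band `B` has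
no strictly increasing chain of `n+1` elements, then any product of `n+1` elements of
the kernel of the support map vanishes: the kernel is a nilpotent ideal. -/
theorem stmt10 {B : Type*} [Semigroup B] [Fintype B] {k : Type*} [CommRing k]
    (idem : ∀ x : B, x * x = x) (lrb : ∀ x y : B, x * y * x = x * y)
    (n : ℕ)
    (hchain : ∀ c : Fin (n + 1) → B, ¬ StrictMono (fun i => leftIdeal (c i)))
    (r : Fin (n + 1) → MonoidAlgebra k B)
    (hker : ∀ i : Fin (n + 1), ∀ c : B,
      (∑ b : B, if leftIdeal b = leftIdeal c then (r i).coeff b else 0) = 0) :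
    (List.ofFn (fun i : Fin n => r i.succ)).foldl (· * ·) (r 0) = 0 := by
  classical
  set L := List.ofFn (fun i : Fin n => r i.succ) with hL
  have hlen : L.length = n := by simp [hL]
  have hmem : ∀ s ∈ L, inKer s := by
    intro s hs
    rw [hL, List.mem_ofFn] at hs
    obtain ⟨i, rfl⟩ := hs
    exact hker i.succ
  have hch : ∀ w : B,
      ¬ ∃ c : ℕ → B, (∀ i < n, leftIdeal (c i) < leftIdeal (c (i + 1))) ∧ c n = w := by
    rintro w ⟨c, hc, -⟩
    apply hchain (fun i : Fin (n + 1) => c i)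
    rw [Fin.strictMono_iff_lt_succ]
    intro i
    exact hc i i.isLt
  conv_lhs => rw [expand_sum (r 0)]
  rw [foldl_sum]
  apply Finset.sum_eq_zero
  intro w _
  have : MonoidAlgebra.single w ((r 0).coeff w) = (r 0).coeff w • MonoidAlgebra.single w (1 : k) := by
    rw [MonoidAlgebra.smul_single', mul_one]
  rw [this, foldl_smul, key idem lrb n w L hmem hlen.ge (hch w), smul_zero]
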